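/- For measures μ, ν on ℝ^d with finite mass and finite p-th moment, the infimum defining T_p^{a,b}(μ,ν) = inf over μ̃, ν̃ with |μ̃|=|ν̃| of a^p(|μ−μ̃|+|ν−ν̃|)^p + b^p W_p^p(μ̃,ν̃) is unchanged if one adds the constraints μ̃ ≤ μ and ν̃ ≤ ν. -/

import Mathlib

open MeasureTheory Set
open scoped ENNReal NNReal

noncomputable section

abbrev Rd (d : ℕ) := EuclideanSpace ℝ (Fin d)

/-- Transference plans: probability measures on the product with normalized marginals. -/
def IsPlan {d : ℕ} (μ ν : Measure (Rd d)) (π : Measure (Rd d × Rd d)) : Prop :=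
  IsProbabilityMeasure π ∧ π.map Prod.fst = (μ Set.univ)⁻¹ • μ ∧
    π.map Prod.snd = (ν Set.univ)⁻¹ • ν

/-- Cost of a plan. -/
def planCost {d : ℕ} (p : ℝ) (π : Measure (Rd d × Rd d)) : ℝ≥0∞ :=
  ∫⁻ q, (edist q.1 q.2) ^ p ∂π

/-- Mass-scaled Wasserstein distance `W_p(μ,ν) = |μ| (inf_π ∫ |x-y|^p dπ)^{1/p}`. -/
def Wp {d : ℕ} (p : ℝ) (μ ν : Measure (Rd d)) : ℝ≥0∞ :=
  μ Set.univ * (⨅ π : {π : Measure (Rd d × Rd d) // IsPlan μ ν π}, planCost p π.1) ^ (1/p)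

/-- Total variation norm `|μ - ν|` of the difference of two measures. -/
def tv {d : ℕ} (μ ν : Measure (Rd d)) : ℝ≥0∞ := (μ - ν) Set.univ + (ν - μ) Set.univ

/-- Finite mass and finite `p`-th moment. -/
def finMom {d : ℕ} (p : ℝ) (μ : Measure (Rd d)) : Prop :=
  IsFiniteMeasure μ ∧ ∫⁻ x, (‖x‖₊ : ℝ≥0∞) ^ p ∂μ ≠ ⊤

/-- The functional `T_p^{a,b}`. -/
def Tab {d : ℕ} (a b p : ℝ) (μ ν : Measure (Rd d)) : ℝ≥0∞ :=
  ⨅ (μ' : Measure (Rd d)) (ν' : Measure (Rd d)) (_ : IsFiniteMeasure μ')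
    (_ : IsFiniteMeasure ν') (_ : μ' Set.univ = ν' Set.univ),
    ENNReal.ofReal a ^ p * (tv μ μ' + tv ν ν') ^ p + ENNReal.ofReal b ^ p * Wp p μ' ν' ^ p

/-- The generalized Wasserstein distance `W_p^{a,b}`. -/
def Wab {d : ℕ} (a b p : ℝ) (μ ν : Measure (Rd d)) : ℝ≥0∞ := Tab a b p μ ν ^ (1/p)

open scoped ProbabilityTheory
noncomputable section

namespace TabAux

variable {α : Type*} [MeasurableSpace α]

/-- On a set where `ξ ≤ μ` holds (for the restrictions), the measure subtraction is
computed pointwise. -/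
lemma sub_apply_of_subset {μ ξ : Measure α} [IsFiniteMeasure ξ] {s t : Set α}
    (hs : MeasurableSet s) (ht : MeasurableSet t) (hts : t ⊆ s)
    (hr : ξ.restrict s ≤ μ.restrict s) :
    (μ - ξ) t = μ t - ξ t := by
  have h1 : (μ - ξ) t = (μ - ξ).restrict s t := by
    rw [Measure.restrict_apply ht, inter_eq_self_of_subset_left hts]
  rw [h1, Measure.restrict_sub_eq_restrict_sub_restrict hs, Measure.sub_apply ht hr,
    Measure.restrict_apply ht, inter_eq_self_of_subset_left hts,
    Measure.restrict_apply ht, inter_eq_self_of_subset_left hts]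

lemma le_sub_add (μ ν : Measure α) [IsFiniteMeasure μ] [IsFiniteMeasure ν] :
    μ ≤ (μ - ν) + ν := by
  obtain ⟨s, hs, hle1, hle2⟩ := hahn_decomposition (μ := μ) (ν := ν)
  have hr : ν.restrict s ≤ μ.restrict s := by
    rw [Measure.le_iff]
    intro u hu
    rw [Measure.restrict_apply hu, Measure.restrict_apply hu]
    exact hle1 _ (hu.inter hs) inter_subset_right
  rw [Measure.le_iff]
  intro t ht
  have hint : ν (t ∩ s) ≤ μ (t ∩ s) := hle1 _ (ht.inter hs) inter_subset_right
  have hsub : (μ - ν) (t ∩ s) = μ (t ∩ s) - ν (t ∩ s) :=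
    sub_apply_of_subset hs (ht.inter hs) inter_subset_right hr
  calc μ t = μ (t ∩ s) + μ (t \ s) := (measure_inter_add_diff t hs).symm
    _ ≤ μ (t ∩ s) + ν (t \ s) :=
        add_le_add_right (hle2 _ (ht.diff hs) (fun x hx => hx.2)) _
    _ = ((μ (t ∩ s) - ν (t ∩ s)) + ν (t ∩ s)) + ν (t \ s) := by
        rw [tsub_add_cancel_of_le hint]
    _ = (μ - ν) (t ∩ s) + (ν (t ∩ s) + ν (t \ s)) := by rw [hsub, add_assoc]
    _ ≤ (μ - ν) t + ν t :=
        add_le_add (measure_mono inter_subset_left) (le_of_eq (measure_inter_add_diff t hs))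
    _ = ((μ - ν) + ν) t := (Measure.add_apply _ _ _).symm

lemma sub_triangle (μ ξ ν : Measure α) [IsFiniteMeasure μ] [IsFiniteMeasure ξ]
    [IsFiniteMeasure ν] : μ - ν ≤ (μ - ξ) + (ξ - ν) := by
  refine Measure.sub_le_of_le_add ?_
  calc μ ≤ (μ - ξ) + ξ := le_sub_add μ ξ
    _ ≤ (μ - ξ) + ((ξ - ν) + ν) := add_le_add_right (le_sub_add ξ ν) _
    _ = ((μ - ξ) + (ξ - ν)) + ν := (add_assoc _ _ _).symm

lemma hahn_mass (μ ξ : Measure α) [IsFiniteMeasure μ] [IsFiniteMeasure ξ] :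
    (μ - ξ) univ + ξ univ ≤ (ξ - μ) univ + μ univ := by
  obtain ⟨s, hs, hle1, hle2⟩ := hahn_decomposition (μ := μ) (ν := ξ)
  have hr : ξ.restrict s ≤ μ.restrict s := by
    rw [Measure.le_iff]
    intro u hu
    rw [Measure.restrict_apply hu, Measure.restrict_apply hu]
    exact hle1 _ (hu.inter hs) inter_subset_right
  have hr' : μ.restrict sᶜ ≤ ξ.restrict sᶜ := by
    rw [Measure.le_iff]
    intro u hu
    rw [Measure.restrict_apply hu, Measure.restrict_apply hu]
    exact hle2 _ (hu.inter hs.compl) inter_subset_right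
  have e1 : (μ - ξ) s = μ s - ξ s := sub_apply_of_subset hs hs Subset.rfl hr
  have e0 : (μ - ξ) sᶜ = 0 :=
    Measure.sub_apply_eq_zero_of_restrict_le_restrict hr' hs.compl
  have e2 : (ξ - μ) sᶜ = ξ sᶜ - μ sᶜ :=
    sub_apply_of_subset hs.compl hs.compl Subset.rfl hr'
  calc (μ - ξ) univ + ξ univ
      = ((μ - ξ) s + (μ - ξ) sᶜ) + (ξ s + ξ sᶜ) := by
        rw [measure_add_measure_compl hs, measure_add_measure_compl hs]
    _ = ((μ s - ξ s) + ξ s) + ξ sᶜ := by rw [e1, e0, add_zero, add_assoc]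
    _ = μ s + ξ sᶜ := by rw [tsub_add_cancel_of_le (hle1 s hs Subset.rfl)]
    _ = μ s + ((ξ sᶜ - μ sᶜ) + μ sᶜ) := by
        rw [tsub_add_cancel_of_le (hle2 sᶜ hs.compl Subset.rfl)]
    _ = (ξ - μ) sᶜ + (μ s + μ sᶜ) := by rw [e2]; ring
    _ ≤ (ξ - μ) univ + μ univ := by
        rw [measure_add_measure_compl hs]
        exact add_le_add_left (measure_mono (subset_univ _)) _

lemma compProd_mono {β : Type*} [MeasurableSpace β] {ρ ρ' : Measure α}
    (κ : ProbabilityTheory.Kernel α β) [SFinite ρ] [SFinite ρ'] [ProbabilityTheory.IsSFiniteKernel κ]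
    (h : ρ ≤ ρ') : ρ ⊗ₘ κ ≤ ρ' ⊗ₘ κ := by
  rw [Measure.le_iff]
  intro s hs
  rw [Measure.compProd_apply hs, Measure.compProd_apply hs]
  exact lintegral_mono' h le_rfl

end TabAux

open scoped ProbabilityTheory

namespace TabAux

variable {d : ℕ}

lemma exists_constrained (p : ℝ) (hp : 1 ≤ p)
    (μ ν μ' ν' : Measure (Rd d)) [IsFiniteMeasure μ] [IsFiniteMeasure ν]
    [IsFiniteMeasure μ'] [IsFiniteMeasure ν'] (hmass : μ' Set.univ = ν' Set.univ)
    (hm0 : μ' Set.univ ≠ 0)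
    (π : Measure (Rd d × Rd d)) (hπ : IsPlan μ' ν' π) :
    ∃ μ₂ ν₂ : Measure (Rd d), IsFiniteMeasure μ₂ ∧ IsFiniteMeasure ν₂ ∧ μ₂ ≤ μ ∧ ν₂ ≤ ν ∧
      μ₂ Set.univ = ν₂ Set.univ ∧
      tv μ μ₂ + tv ν ν₂ ≤ tv μ μ' + tv ν ν' ∧
      Wp p μ₂ ν₂ ^ p ≤ (μ' Set.univ) ^ p * planCost p π := by
  have hp0 : (0:ℝ) < p := lt_of_lt_of_le one_pos hp
  haveI := hπ.1
  set m : ℝ≥0∞ := μ' Set.univ with hm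
  have hmT : m ≠ ⊤ := measure_ne_top μ' _
  -- the scaled plan, a coupling of μ' and ν'
  set σ : Measure (Rd d × Rd d) := m • π with hσ
  have hσuniv : σ Set.univ = m := by
    rw [hσ, Measure.smul_apply, measure_univ, smul_eq_mul, mul_one]
  haveI : IsFiniteMeasure σ := ⟨by rw [hσuniv]; exact Ne.lt_top hmT⟩
  have hσfst : σ.fst = μ' := by
    rw [Measure.fst, hσ, Measure.map_smul, hπ.2.1, smul_smul,
      ENNReal.mul_inv_cancel hm0 hmT, one_smul]
  have hσsnd : σ.snd = ν' := by
    rw [Measure.snd, hσ, Measure.map_smul, hπ.2.2, ← hmass, smul_smul,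
      ENNReal.mul_inv_cancel hm0 hmT, one_smul]
  -- first restriction: the part of μ' below μ
  set μ₁ : Measure (Rd d) := μ - (μ - μ') with hμ₁
  have h1μ : μ₁ ≤ μ := Measure.sub_le
  have h1μ' : μ₁ ≤ μ' :=
    Measure.sub_le_of_le_add ((le_sub_add μ μ').trans_eq (add_comm _ _))
  set σ₁ : Measure (Rd d × Rd d) := μ₁ ⊗ₘ σ.condKernel with hσ₁
  have hσ₁le : σ₁ ≤ σ := by
    have h := compProd_mono σ.condKernel (h1μ'.trans_eq hσfst.symm)
    rwa [Measure.disintegrate σ σ.condKernel] at h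
  haveI : IsFiniteMeasure σ₁ := isFiniteMeasure_of_le σ hσ₁le
  have hσ₁fst : σ₁.fst = μ₁ := Measure.fst_compProd μ₁ σ.condKernel
  set ν₁ : Measure (Rd d) := σ₁.snd with hν₁def
  have hν₁ : ν₁ ≤ ν' := (Measure.snd_mono hσ₁le).trans_eq hσsnd
  haveI : IsFiniteMeasure ν₁ := isFiniteMeasure_of_le ν' hν₁
  -- second restriction: the part of ν₁ below ν
  set ν₂ : Measure (Rd d) := ν - (ν - ν₁) with hν₂
  have h2ν : ν₂ ≤ ν := Measure.sub_le
  have h2ν₁ : ν₂ ≤ ν₁ :=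
    Measure.sub_le_of_le_add ((le_sub_add ν ν₁).trans_eq (add_comm _ _))
  haveI : IsFiniteMeasure ν₂ := isFiniteMeasure_of_le ν h2ν
  set τ : Measure (Rd d × Rd d) := σ₁.map Prod.swap with hτ
  haveI : IsFiniteMeasure τ := by
    constructor
    rw [hτ, Measure.map_apply measurable_swap MeasurableSet.univ]
    exact measure_lt_top σ₁ _
  have hτfst : τ.fst = ν₁ := Measure.fst_map_swap
  set σ₂' : Measure (Rd d × Rd d) := ν₂ ⊗ₘ τ.condKernel with hσ₂'
  have hσ₂'le : σ₂' ≤ τ := by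
    have h := compProd_mono τ.condKernel (h2ν₁.trans_eq hτfst.symm)
    rwa [Measure.disintegrate τ τ.condKernel] at h
  have hσ₂'fst : σ₂'.fst = ν₂ := Measure.fst_compProd ν₂ τ.condKernel
  set σ₂ : Measure (Rd d × Rd d) := σ₂'.map Prod.swap with hσ₂def
  have hσ₂le : σ₂ ≤ σ₁ := by
    have h := Measure.map_mono hσ₂'le measurable_swap
    rwa [hτ, Measure.map_map measurable_swap measurable_swap, Prod.swap_swap_eq,
      Measure.map_id] at h
  haveI : IsFiniteMeasure σ₂ := isFiniteMeasure_of_le σ₁ hσ₂le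
  have hσ₂snd : σ₂.snd = ν₂ := by rw [hσ₂def, Measure.snd_map_swap, hσ₂'fst]
  set μ₂ : Measure (Rd d) := σ₂.fst with hμ₂def
  have hμ₂le : μ₂ ≤ μ := ((Measure.fst_mono hσ₂le).trans_eq hσ₁fst).trans h1μ
  haveI : IsFiniteMeasure μ₂ := isFiniteMeasure_of_le μ hμ₂le
  have hmass₂ : μ₂ Set.univ = ν₂ Set.univ := by
    rw [hμ₂def, Measure.fst_univ, ← Measure.snd_univ, hσ₂snd]
  -- cost bound
  have hσ₂σ : σ₂ ≤ σ := hσ₂le.trans hσ₁le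
  have hcost : (∫⁻ q, edist q.1 q.2 ^ p ∂σ₂) ≤ m * planCost p π := by
    calc (∫⁻ q, edist q.1 q.2 ^ p ∂σ₂) ≤ ∫⁻ q, edist q.1 q.2 ^ p ∂σ :=
          lintegral_mono' hσ₂σ le_rfl
      _ = m * planCost p π := by rw [hσ, lintegral_smul_measure]; rfl
  -- Wasserstein bound
  have hWp : Wp p μ₂ ν₂ ^ p ≤ m ^ p * planCost p π := by
    set m₂ : ℝ≥0∞ := σ₂ Set.univ with hm₂def
    have hμ₂univ : μ₂ Set.univ = m₂ := Measure.fst_univ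
    by_cases hm₂ : m₂ = 0
    · rw [Wp, hμ₂univ, hm₂, zero_mul, ENNReal.zero_rpow_of_pos hp0]
      exact zero_le
    · have hm₂T : m₂ ≠ ⊤ := measure_ne_top σ₂ _
      have hm₂m : m₂ ≤ m := by
        rw [hm₂def, ← hσuniv]
        exact Measure.le_iff'.1 hσ₂σ Set.univ
      set π₂ : Measure (Rd d × Rd d) := m₂⁻¹ • σ₂ with hπ₂
      have hplan₂ : IsPlan μ₂ ν₂ π₂ := by
        refine ⟨⟨by rw [hπ₂, Measure.smul_apply, smul_eq_mul,
          ENNReal.inv_mul_cancel hm₂ hm₂T]⟩, ?_, ?_⟩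
        · rw [hπ₂, Measure.map_smul, hμ₂univ]
          rfl
        · rw [hπ₂, Measure.map_smul, ← hmass₂, hμ₂univ]
          show m₂⁻¹ • σ₂.snd = m₂⁻¹ • ν₂
          rw [hσ₂snd]
      have hC₂ : planCost p π₂ = m₂⁻¹ * ∫⁻ q, edist q.1 q.2 ^ p ∂σ₂ := by
        rw [planCost, hπ₂, lintegral_smul_measure, smul_eq_mul]
      have hWle : Wp p μ₂ ν₂ ≤ m₂ * (planCost p π₂) ^ (1/p) := by
        rw [Wp, hμ₂univ]
        refine mul_le_mul_right (ENNReal.rpow_le_rpow ?_ (by positivity)) _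
        exact iInf_le (fun πs : {π : Measure (Rd d × Rd d) // IsPlan μ₂ ν₂ π} =>
          planCost p πs.1) ⟨π₂, hplan₂⟩
      have hpow : ∀ x : ℝ≥0∞, x ≠ 0 → x ≠ ⊤ → x ^ (p-1) * x = x ^ p := by
        intro x hx hxT
        calc x ^ (p-1) * x = x ^ (p-1) * x ^ (1:ℝ) := by rw [ENNReal.rpow_one]
          _ = x ^ (p - 1 + 1) := (ENNReal.rpow_add _ _ hx hxT).symm
          _ = x ^ p := by rw [sub_add_cancel]
      calc Wp p μ₂ ν₂ ^ p ≤ (m₂ * planCost p π₂ ^ (1/p)) ^ p :=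
            ENNReal.rpow_le_rpow hWle hp0.le
        _ = m₂ ^ p * planCost p π₂ := by
            rw [ENNReal.mul_rpow_of_nonneg _ _ hp0.le, ← ENNReal.rpow_mul,
              one_div_mul_cancel hp0.ne', ENNReal.rpow_one]
        _ = (m₂ ^ p * m₂⁻¹) * ∫⁻ q, edist q.1 q.2 ^ p ∂σ₂ := by
            rw [hC₂, mul_assoc]
        _ = m₂ ^ (p-1) * ∫⁻ q, edist q.1 q.2 ^ p ∂σ₂ := by
            rw [← hpow m₂ hm₂ hm₂T, mul_assoc (m₂ ^ (p-1)), ENNReal.mul_inv_cancel hm₂ hm₂T,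
              mul_one]
        _ ≤ m ^ (p-1) * (m * planCost p π) :=
            mul_le_mul' (ENNReal.rpow_le_rpow hm₂m (by linarith)) hcost
        _ = m ^ p * planCost p π := by
            rw [← mul_assoc, hpow m hm0 hmT]
  -- total variation bound
  have htv : tv μ μ₂ + tv ν ν₂ ≤ tv μ μ' + tv ν ν' := by
    have hμ₁univ : μ₁ Set.univ = μ Set.univ - (μ - μ') Set.univ :=
      Measure.sub_apply MeasurableSet.univ Measure.sub_le
    have hν₂univ : ν₂ Set.univ = ν Set.univ - (ν - ν₁) Set.univ :=
      Measure.sub_apply MeasurableSet.univ Measure.sub_le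
    have hν₁univ : ν₁ Set.univ = μ₁ Set.univ := by
      rw [hν₁def, Measure.snd_univ, ← hσ₁fst, Measure.fst_univ]
    have htri : (ν - ν₁) Set.univ ≤ (ν - ν') Set.univ + (ν' - ν₁) Set.univ := by
      have h := Measure.le_iff'.1 (sub_triangle ν ν' ν₁) Set.univ
      rwa [Measure.add_apply] at h
    have hrB6 : (ν' - ν₁) Set.univ = ν' Set.univ - ν₁ Set.univ :=
      Measure.sub_apply MeasurableSet.univ hν₁
    have hHμ := hahn_mass μ μ'
    have hHν := hahn_mass ν ν'
    have htvμ₂ : tv μ μ₂ = μ Set.univ - μ₂ Set.univ := by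
      rw [tv, Measure.sub_apply MeasurableSet.univ hμ₂le,
        Measure.sub_eq_zero_of_le hμ₂le]
      simp
    have htvν₂ : tv ν ν₂ = ν Set.univ - ν₂ Set.univ := by
      rw [tv, Measure.sub_apply MeasurableSet.univ h2ν,
        Measure.sub_eq_zero_of_le h2ν]
      simp
    rw [htvμ₂, htvν₂, tv, tv]
    -- pass to real numbers
    set A1 := μ Set.univ; set A2 := ν Set.univ; set A3 := μ' Set.univ
    set A4 := ν' Set.univ; set A5 := μ₁ Set.univ; set A6 := ν₁ Set.univ
    set A7 := ν₂ Set.univ; set A8 := μ₂ Set.univ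
    set B1 := (μ - μ') Set.univ; set B2 := (μ' - μ) Set.univ
    set B3 := (ν - ν') Set.univ; set B4 := (ν' - ν) Set.univ
    set B5 := (ν - ν₁) Set.univ; set B6 := (ν' - ν₁) Set.univ
    have fA1 : A1 ≠ ⊤ := measure_ne_top μ _
    have fA2 : A2 ≠ ⊤ := measure_ne_top ν _
    have fA4 : A4 ≠ ⊤ := measure_ne_top ν' _
    have fB1 : B1 ≠ ⊤ := measure_ne_top _ _
    have fB2 : B2 ≠ ⊤ := measure_ne_top _ _
    have fB3 : B3 ≠ ⊤ := measure_ne_top _ _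
    have fB4 : B4 ≠ ⊤ := measure_ne_top _ _
    have fB5 : B5 ≠ ⊤ := measure_ne_top _ _
    have fB6 : B6 ≠ ⊤ := measure_ne_top _ _
    have hA8A1 : A8 ≤ A1 := Measure.le_iff'.1 hμ₂le Set.univ
    have hA7A2 : A7 ≤ A2 := Measure.le_iff'.1 h2ν Set.univ
    have hB1A1 : B1 ≤ A1 := Measure.le_iff'.1 Measure.sub_le Set.univ
    have hB5A2 : B5 ≤ A2 := Measure.le_iff'.1 Measure.sub_le Set.univ
    have hA6A4 : A6 ≤ A4 := Measure.le_iff'.1 hν₁ Set.univ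
    rw [← ENNReal.toReal_le_toReal
      (by exact ENNReal.add_ne_top.2 ⟨ENNReal.sub_ne_top fA1, ENNReal.sub_ne_top fA2⟩)
      (by exact ENNReal.add_ne_top.2 ⟨ENNReal.add_ne_top.2 ⟨fB1, fB2⟩,
        ENNReal.add_ne_top.2 ⟨fB3, fB4⟩⟩)]
    rw [ENNReal.toReal_add (ENNReal.sub_ne_top fA1) (ENNReal.sub_ne_top fA2),
      ENNReal.toReal_add (ENNReal.add_ne_top.2 ⟨fB1, fB2⟩) (ENNReal.add_ne_top.2 ⟨fB3, fB4⟩),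
      ENNReal.toReal_add fB1 fB2, ENNReal.toReal_add fB3 fB4,
      ENNReal.toReal_sub_of_le hA8A1 fA1, ENNReal.toReal_sub_of_le hA7A2 fA2]
    have e1 : A5.toReal = A1.toReal - B1.toReal := by
      rw [hμ₁univ, ENNReal.toReal_sub_of_le hB1A1 fA1]
    have e2 : A7.toReal = A2.toReal - B5.toReal := by
      rw [hν₂univ, ENNReal.toReal_sub_of_le hB5A2 fA2]
    have e3 : A6.toReal = A5.toReal := by rw [hν₁univ]
    have e4 : B5.toReal ≤ B3.toReal + B6.toReal := by
      rw [← ENNReal.toReal_add fB3 fB6]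
      exact ENNReal.toReal_mono (ENNReal.add_ne_top.2 ⟨fB3, fB6⟩) htri
    have e5 : B6.toReal = A4.toReal - A6.toReal := by
      rw [hrB6, ENNReal.toReal_sub_of_le hA6A4 fA4]
    have e6 : B1.toReal + A3.toReal ≤ B2.toReal + A1.toReal := by
      rw [← ENNReal.toReal_add fB1 (measure_ne_top _ _), ← ENNReal.toReal_add fB2 fA1]
      exact ENNReal.toReal_mono (ENNReal.add_ne_top.2 ⟨fB2, fA1⟩) hHμ
    have e7 : B3.toReal + A4.toReal ≤ B4.toReal + A2.toReal := by
      rw [← ENNReal.toReal_add fB3 fA4, ← ENNReal.toReal_add fB4 fA2]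
      exact ENNReal.toReal_mono (ENNReal.add_ne_top.2 ⟨fB4, fA2⟩) hHν
    have e8 : A8.toReal = A7.toReal := by rw [hmass₂]
    have e9 : A3.toReal = A4.toReal := by rw [← hm, hmass]
    linarith
  exact ⟨μ₂, ν₂, inferInstance, inferInstance, hμ₂le, h2ν, hmass₂, htv, hWp⟩

end TabAux


namespace TabAux

lemma plan_nonempty {d : ℕ} (μ' ν' : Measure (Rd d)) [IsFiniteMeasure μ'] [IsFiniteMeasure ν']
    (hm0 : μ' Set.univ ≠ 0) (hn0 : ν' Set.univ ≠ 0) :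
    Nonempty {π : Measure (Rd d × Rd d) // IsPlan μ' ν' π} := by
  haveI h1 : IsProbabilityMeasure ((μ' Set.univ)⁻¹ • μ') :=
    ⟨by rw [Measure.smul_apply, smul_eq_mul,
      ENNReal.inv_mul_cancel hm0 (measure_ne_top _ _)]⟩
  haveI h2 : IsProbabilityMeasure ((ν' Set.univ)⁻¹ • ν') :=
    ⟨by rw [Measure.smul_apply, smul_eq_mul,
      ENNReal.inv_mul_cancel hn0 (measure_ne_top _ _)]⟩
  exact ⟨⟨((μ' Set.univ)⁻¹ • μ').prod ((ν' Set.univ)⁻¹ • ν'), inferInstance,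
    Measure.fst_prod, Measure.snd_prod⟩⟩

lemma rhs_le_val {d : ℕ} (a b p : ℝ) (ha : 0 < a) (hb : 0 < b) (hp : 1 ≤ p)
    (μ ν : Measure (Rd d)) [IsFiniteMeasure μ] [IsFiniteMeasure ν]
    (μ' ν' : Measure (Rd d)) [IsFiniteMeasure μ'] [IsFiniteMeasure ν']
    (hmass : μ' Set.univ = ν' Set.univ) :
    (⨅ (μ₂ : Measure (Rd d)) (ν₂ : Measure (Rd d)) (_ : IsFiniteMeasure μ₂)
        (_ : IsFiniteMeasure ν₂) (_ : μ₂ ≤ μ) (_ : ν₂ ≤ ν)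
        (_ : μ₂ Set.univ = ν₂ Set.univ),
        ENNReal.ofReal a ^ p * (tv μ μ₂ + tv ν ν₂) ^ p +
          ENNReal.ofReal b ^ p * Wp p μ₂ ν₂ ^ p) ≤
      ENNReal.ofReal a ^ p * (tv μ μ' + tv ν ν') ^ p +
        ENNReal.ofReal b ^ p * Wp p μ' ν' ^ p := by
  have hp0 : (0:ℝ) < p := lt_of_lt_of_le one_pos hp
  by_cases hm0 : μ' Set.univ = 0
  · have h1 : μ' = 0 := Measure.measure_univ_eq_zero.mp hm0
    have h2 : ν' = 0 := Measure.measure_univ_eq_zero.mp (hmass ▸ hm0)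
    subst h1; subst h2
    exact iInf_le_of_le 0 (iInf_le_of_le 0 (iInf_le_of_le inferInstance
      (iInf_le_of_le inferInstance (iInf_le_of_le (Measure.zero_le μ)
      (iInf_le_of_le (Measure.zero_le ν) (iInf_le _ rfl))))))
  · have hn0 : ν' Set.univ ≠ 0 := fun h => hm0 (hmass.trans h)
    haveI hne := plan_nonempty μ' ν' hm0 hn0
    set A := ENNReal.ofReal a ^ p * (tv μ μ' + tv ν ν') ^ p with hA
    set B := ENNReal.ofReal b ^ p * (μ' Set.univ) ^ p with hB
    have key : ∀ πs : {π : Measure (Rd d × Rd d) // IsPlan μ' ν' π},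
        (⨅ (μ₂ : Measure (Rd d)) (ν₂ : Measure (Rd d)) (_ : IsFiniteMeasure μ₂)
          (_ : IsFiniteMeasure ν₂) (_ : μ₂ ≤ μ) (_ : ν₂ ≤ ν)
          (_ : μ₂ Set.univ = ν₂ Set.univ),
          ENNReal.ofReal a ^ p * (tv μ μ₂ + tv ν ν₂) ^ p +
            ENNReal.ofReal b ^ p * Wp p μ₂ ν₂ ^ p) ≤ A + B * planCost p πs.1 := by
      rintro ⟨π, hπ⟩
      obtain ⟨μ₂, ν₂, f1, f2, l1, l2, emass, htv, hW⟩ :=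
        exists_constrained p hp μ ν μ' ν' hmass hm0 π hπ
      refine le_trans (iInf_le_of_le μ₂ (iInf_le_of_le ν₂ (iInf_le_of_le f1 (iInf_le_of_le f2
        (iInf_le_of_le l1 (iInf_le_of_le l2 (iInf_le _ emass))))))) ?_
      refine add_le_add (mul_le_mul_right (ENNReal.rpow_le_rpow htv hp0.le) _) ?_
      rw [hB, mul_assoc]
      exact mul_le_mul_right hW _
    have hB0 : B ≠ 0 := by
      rw [hB]
      apply mul_ne_zero
      · rw [Ne, ENNReal.rpow_eq_zero_iff_of_pos hp0, ENNReal.ofReal_eq_zero]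
        push_neg
        exact hb
      · rw [Ne, ENNReal.rpow_eq_zero_iff_of_pos hp0]
        exact hm0
    have hBT : B ≠ ⊤ := ENNReal.mul_ne_top
      (ENNReal.rpow_ne_top_of_nonneg hp0.le ENNReal.ofReal_ne_top)
      (ENNReal.rpow_ne_top_of_nonneg hp0.le (measure_ne_top _ _))
    refine le_trans (le_iInf key) (le_of_eq ?_)
    rw [← ENNReal.add_iInf, ← ENNReal.mul_iInf_of_ne hB0 hBT]
    have hWp : Wp p μ' ν' ^ p
        = (μ' Set.univ) ^ p * ⨅ πs : {π : Measure (Rd d × Rd d) // IsPlan μ' ν' π},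
            planCost p πs.1 := by
      rw [Wp, ENNReal.mul_rpow_of_nonneg _ _ hp0.le, ← ENNReal.rpow_mul,
        one_div_mul_cancel hp0.ne', ENNReal.rpow_one]
    rw [hWp, hB, mul_assoc]

end TabAux

/-- the infimum defining `T_p^{a,b}` is unchanged when adding the
constraints `μ̃ ≤ μ` and `ν̃ ≤ ν`. -/
theorem Tab_eq_inf_le {d : ℕ} (a b p : ℝ) (ha : 0 < a) (hb : 0 < b) (hp : 1 ≤ p)
    (μ ν : Measure (Rd d)) (hμ : finMom p μ) (hν : finMom p ν) :
    Tab a b p μ ν =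
      ⨅ (μ' : Measure (Rd d)) (ν' : Measure (Rd d)) (_ : IsFiniteMeasure μ')
        (_ : IsFiniteMeasure ν') (_ : μ' ≤ μ) (_ : ν' ≤ ν)
        (_ : μ' Set.univ = ν' Set.univ),
        ENNReal.ofReal a ^ p * (tv μ μ' + tv ν ν') ^ p +
          ENNReal.ofReal b ^ p * Wp p μ' ν' ^ p := by
  haveI := hμ.1
  haveI := hν.1
  apply le_antisymm
  · refine le_iInf fun μ' => le_iInf fun ν' => le_iInf fun f1 => le_iInf fun f2 =>
      le_iInf fun _ => le_iInf fun _ => le_iInf fun hmass => ?_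
    rw [Tab]
    exact iInf_le_of_le μ' (iInf_le_of_le ν' (iInf_le_of_le f1 (iInf_le_of_le f2
      (iInf_le _ hmass))))
  · rw [Tab]
    refine le_iInf fun μ' => le_iInf fun ν' => le_iInf fun f1 => le_iInf fun f2 =>
      le_iInf fun hmass => ?_
    haveI := f1
    haveI := f2
    exact TabAux.rhs_le_val a b p ha hb hp μ ν μ' ν' hmass
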